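/- There exists a constant c > 0 such that for all nonzero vectors a, b, c in ℝ² with c = a + b and |a| ≤ min(|b|, |c|), one has Λ(a) + Λ(b) - Λ(c) ≥ c·[ |a|·(1 - (c·a)/(|c||a|) + 1 - (c·b)/(|c||b|)) + (|b||c|/(1+|b||c|))·(|a|/(1+|a|²)) ], where Λ(v) = |v|·√((2+|v|²)/(1+|v|²)). -/

import Mathlib

noncomputable def Lam (v : EuclideanSpace ℝ (Fin 2)) : ℝ :=
  ‖v‖ * Real.sqrt ((2 + ‖v‖ ^ 2) / (1 + ‖v‖ ^ 2))

noncomputable def lam (r : ℝ) : ℝ := r * Real.sqrt ((2 + r ^ 2) / (1 + r ^ 2))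

lemma lam_sq (r : ℝ) : lam r ^ 2 = r ^ 2 * ((2 + r ^ 2) / (1 + r ^ 2)) := by
  have h : (0:ℝ) ≤ (2 + r ^ 2) / (1 + r ^ 2) := by positivity
  rw [lam, mul_pow, Real.sq_sqrt h]

lemma lam_nonneg {r : ℝ} (hr : 0 ≤ r) : 0 ≤ lam r := by
  unfold lam; positivity

lemma sqrt_two_le : Real.sqrt 2 ≤ 3/2 := by
  nlinarith [Real.sq_sqrt (by norm_num : (0:ℝ) ≤ 2), Real.sqrt_nonneg 2]

lemma le_sqrt_two : 1 ≤ Real.sqrt 2 := by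
  nlinarith [Real.sq_sqrt (by norm_num : (0:ℝ) ≤ 2), Real.sqrt_nonneg 2]

lemma le_lam {r : ℝ} (hr : 0 ≤ r) : r ≤ lam r := by
  have h1 : (1:ℝ) ≤ (2 + r ^ 2) / (1 + r ^ 2) := by
    rw [le_div_iff₀ (by positivity)]; nlinarith
  have h2 : (1:ℝ) ≤ Real.sqrt ((2 + r ^ 2) / (1 + r ^ 2)) := by
    nlinarith [Real.sq_sqrt (le_trans zero_le_one h1),
      Real.sqrt_nonneg ((2 + r ^ 2) / (1 + r ^ 2))]
  calc r = r * 1 := by ring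
    _ ≤ r * Real.sqrt ((2 + r ^ 2) / (1 + r ^ 2)) := mul_le_mul_of_nonneg_left h2 hr
    _ = lam r := rfl

lemma lam_le {r : ℝ} (hr : 0 ≤ r) : lam r ≤ Real.sqrt 2 * r := by
  have h1 : (2 + r ^ 2) / (1 + r ^ 2) ≤ 2 := by
    rw [div_le_iff₀ (by positivity)]; nlinarith
  have h2 : Real.sqrt ((2 + r ^ 2) / (1 + r ^ 2)) ≤ Real.sqrt 2 := Real.sqrt_le_sqrt h1
  calc lam r = r * Real.sqrt ((2 + r ^ 2) / (1 + r ^ 2)) := rfl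
    _ ≤ r * Real.sqrt 2 := mul_le_mul_of_nonneg_left h2 hr
    _ = Real.sqrt 2 * r := by ring

lemma lam_diff {t s : ℝ} (ht : 0 ≤ t) (hts : t ≤ s) :
    (s - t) / Real.sqrt 2 ≤ lam s - lam t := by
  have hs : 0 ≤ s := ht.trans hts
  have hsq2 : (0:ℝ) < Real.sqrt 2 := by positivity
  rcases hs.lt_or_eq with hpos | h0
  · have hL : 0 < lam s + lam t :=
      lt_of_lt_of_le hpos ((le_lam hs).trans (le_add_of_nonneg_right (lam_nonneg ht)))
    have hst2 : 0 ≤ s^2 - t^2 := by nlinarith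
    have hmonosq : s^2 - t^2 ≤ lam s ^2 - lam t ^2 := by
      have e1 : lam s ^2 - lam t ^2 - (s^2 - t^2) = (s^2 - t^2) / ((1+s^2)*(1+t^2)) := by
        rw [lam_sq, lam_sq]; field_simp; ring
      have e2 : 0 ≤ (s^2 - t^2) / ((1+s^2)*(1+t^2)) := by
        apply div_nonneg hst2; positivity
      linarith
    have hup : lam s + lam t ≤ Real.sqrt 2 * (s + t) := by
      nlinarith [lam_le hs, lam_le ht]
    have hmono : 0 ≤ lam s - lam t := by nlinarith [hst2, hmonosq, hL]
    rw [div_le_iff₀ hsq2]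
    have key : (s - t) * (s + t) ≤ (lam s - lam t) * (lam s + lam t) := by nlinarith [hmonosq]
    have hst : 0 < s + t := by linarith
    have h5 : (lam s - lam t) * (lam s + lam t) ≤ (lam s - lam t) * (Real.sqrt 2 * (s + t)) :=
      mul_le_mul_of_nonneg_left hup hmono
    nlinarith [key, h5, hst]
  · have hs0 : s = 0 := h0.symm
    have ht0 : t = 0 := le_antisymm (hs0 ▸ hts) ht
    simp [hs0, ht0]

lemma mu_lower {r : ℝ} (hr : 0 ≤ r) : (1/3) * (r / (1 + r^2)) ≤ lam r - r := by
  rcases hr.lt_or_eq with hp | h0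
  · have e : lam r ^2 = r^2 + r^2/(1+r^2) := by rw [lam_sq]; field_simp; ring
    have key : (lam r - r) * (lam r + r) = r * (r/(1+r^2)) := by
      have : r * (r/(1+r^2)) = r^2/(1+r^2) := by field_simp
      nlinarith [e, this]
    have hub : lam r + r ≤ (5/2) * r := by nlinarith [lam_le hr, sqrt_two_le, hp]
    have hlb : 0 < lam r + r := by nlinarith [le_lam hr]
    have hw : 0 < r / (1+r^2) := by positivity
    nlinarith [key, hub, hlb, hw, hp, mul_pos hp hw,
      mul_le_mul_of_nonneg_left hub (le_of_lt hw)]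
  · simp [← h0, lam]

lemma lam_lb {r : ℝ} (hr : 0 ≤ r) :
    r * (1 + 1/(1+r^2)/2 - (1/(1+r^2))^2/8) ≤ lam r := by
  have hu0 : (0:ℝ) < 1/(1+r^2) := by positivity
  have hu1 : 1/(1+r^2) ≤ 1 := by rw [div_le_one (by positivity)]; nlinarith
  have hfrac : (2+r^2)/(1+r^2) = 1 + 1/(1+r^2) := by field_simp; ring
  have hpos : (0:ℝ) ≤ 1 + 1/(1+r^2)/2 - (1/(1+r^2))^2/8 := by nlinarith
  have hcube : (0:ℝ) ≤ (1/(1+r^2))^2*(1/(1+r^2))*(1 - 1/(1+r^2)) := by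
    have h8 : (0:ℝ) ≤ 1 - 1/(1+r^2) := by linarith
    positivity
  have hsq : (1 + 1/(1+r^2)/2 - (1/(1+r^2))^2/8)^2 ≤ 1 + 1/(1+r^2) := by
    nlinarith [hcube, hu0, hu1]
  have h2 : 1 + 1/(1+r^2)/2 - (1/(1+r^2))^2/8 ≤ Real.sqrt (1 + 1/(1+r^2)) := by
    calc 1 + 1/(1+r^2)/2 - (1/(1+r^2))^2/8
        = Real.sqrt ((1 + 1/(1+r^2)/2 - (1/(1+r^2))^2/8)^2) := (Real.sqrt_sq hpos).symm
      _ ≤ Real.sqrt (1 + 1/(1+r^2)) := Real.sqrt_le_sqrt hsq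
  calc r * (1 + 1/(1+r^2)/2 - (1/(1+r^2))^2/8)
      ≤ r * Real.sqrt (1 + 1/(1+r^2)) := mul_le_mul_of_nonneg_left h2 hr
    _ = lam r := by rw [lam, hfrac]

lemma mu_dec {s t : ℝ} (hs : 5/4 ≤ s) (hst : s ≤ t) : lam t - t ≤ lam s - s := by
  have hs0 : (0:ℝ) < s := by linarith
  have ht0 : (0:ℝ) < t := by linarith
  have hus0 : (0:ℝ) < 1/(1+s^2) := by positivity
  have hut0 : (0:ℝ) < 1/(1+t^2) := by positivity
  have hus : 1/(1+s^2) ≤ 16/41 := by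
    rw [div_le_iff₀ (by positivity)]; nlinarith
  have hut : 1/(1+t^2) ≤ 16/41 := by
    rw [div_le_iff₀ (by positivity)]; nlinarith
  have hL0 : 0 < lam s + lam t := by
    have := le_lam hs0.le; have := le_lam ht0.le; linarith
  have e1 : 0 ≤ s*((1/(1+s^2))*(16/41 - 1/(1+t^2))) :=
    mul_nonneg hs0.le (mul_nonneg hus0.le (by linarith))
  have e2 : 0 ≤ t*((1/(1+t^2))*(16/41 - 1/(1+s^2))) :=
    mul_nonneg ht0.le (mul_nonneg hut0.le (by linarith))
  have e3 : 0 ≤ s*((1/(1+s^2))*(16/41 - 1/(1+s^2))) :=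
    mul_nonneg hs0.le (mul_nonneg hus0.le (by linarith))
  have e4 : 0 ≤ t*((1/(1+t^2))*(16/41 - 1/(1+t^2))) :=
    mul_nonneg ht0.le (mul_nonneg hut0.le (by linarith))
  have hsum : (s + t) * (1 + (1/(1+s^2))*(1/(1+t^2))) ≤ lam s + lam t := by
    nlinarith [lam_lb hs0.le, lam_lb ht0.le, e1, e2, e3, e4]
  have iden : lam t ^2 - lam s ^2 = (t^2 - s^2)*(1 + (1/(1+s^2))*(1/(1+t^2))) := by
    rw [lam_sq, lam_sq]; field_simp; ring
  have hcross : (t^2 - s^2)*(1 + (1/(1+s^2))*(1/(1+t^2))) ≤ (t - s)*(lam s + lam t) := by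
    have h6 : (t - s) * ((s + t) * (1 + (1/(1+s^2))*(1/(1+t^2))))
        ≤ (t - s) * (lam s + lam t) := mul_le_mul_of_nonneg_left hsum (by linarith)
    nlinarith [h6]
  have hfin : (lam t - lam s) * (lam s + lam t) ≤ (t - s) * (lam s + lam t) := by
    nlinarith [iden, hcross]
  have := (mul_le_mul_iff_left₀ hL0).mp hfin
  linarith

set_option maxRecDepth 4000 in
lemma wcert (a b : ℝ) (ha : 0 ≤ a) (hab : a ≤ b) (hb : b ≤ 5/4) :
    (0:ℝ) ≤ (2497/1000)*b^2 + (247/500)*b^4 - (3/1000)*b^6 + (5997/1000)*a*b + (1987999/1000000)*a*b^3 - (4501/500000)*a*b^5 - (1/1000000)*a*b^7 + (5/2)*a^2 + (497/250)*a^2*b^2 - (507501/500000)*a^2*b^4 - (1501/500000)*a^2*b^6 + (997/500)*a^3*b - (1007501/500000)*a^3*b^3 - (9003/1000000)*a^3*b^5 - (1/1000000)*a^3*b^7 + (1/2)*a^4 - (1009/1000)*a^4*b^2 - (4501/500000)*a^4*b^4 - (1/500000)*a^4*b^6 - (3/1000)*a^5*b - (3001/1000000)*a^5*b^3 - (1/1000000)*a^5*b^5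 := by
  have hy : (0:ℝ) ≤ b - a := by linarith
  have hz : (0:ℝ) ≤ 5/4 - b := by linarith
  have h0 : (0:ℝ) ≤ (b-a)^2*(5/4-b)^2 := (mul_nonneg (pow_nonneg hy 2) (pow_nonneg hz 2))
  have h1 : (0:ℝ) ≤ (b-a)^2*(5/4-b)^4 := (mul_nonneg (pow_nonneg hy 2) (pow_nonneg hz 4))
  have h2 : (0:ℝ) ≤ (b-a)^2*(5/4-b)^8 := (mul_nonneg (pow_nonneg hy 2) (pow_nonneg hz 8))
  have h3 : (0:ℝ) ≤ (b-a)^3 := (pow_nonneg hy 3)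
  have h4 : (0:ℝ) ≤ (b-a)^3*(5/4-b)^1 := (mul_nonneg (pow_nonneg hy 3) (pow_nonneg hz 1))
  have h5 : (0:ℝ) ≤ (b-a)^3*(5/4-b)^4 := (mul_nonneg (pow_nonneg hy 3) (pow_nonneg hz 4))
  have h6 : (0:ℝ) ≤ (b-a)^3*(5/4-b)^7 := (mul_nonneg (pow_nonneg hy 3) (pow_nonneg hz 7))
  have h7 : (0:ℝ) ≤ (b-a)^4*(5/4-b)^6 := (mul_nonneg (pow_nonneg hy 4) (pow_nonneg hz 6))
  have h8 : (0:ℝ) ≤ (b-a)^7 := (pow_nonneg hy 7)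
  have h9 : (0:ℝ) ≤ (b-a)^7*(5/4-b)^3 := (mul_nonneg (pow_nonneg hy 7) (pow_nonneg hz 3))
  have h10 : (0:ℝ) ≤ (b-a)^8*(5/4-b)^2 := (mul_nonneg (pow_nonneg hy 8) (pow_nonneg hz 2))
  have h11 : (0:ℝ) ≤ (b-a)^9*(5/4-b)^1 := (mul_nonneg (pow_nonneg hy 9) (pow_nonneg hz 1))
  have h12 : (0:ℝ) ≤ (b-a)^10 := (pow_nonneg hy 10)
  have h13 : (0:ℝ) ≤ a^1*(b-a)^1*(5/4-b)^1 := (mul_nonneg (mul_nonneg (pow_nonneg ha 1) (pow_nonneg hy 1)) (pow_nonneg hz 1))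
  have h14 : (0:ℝ) ≤ a^1*(b-a)^1*(5/4-b)^3 := (mul_nonneg (mul_nonneg (pow_nonneg ha 1) (pow_nonneg hy 1)) (pow_nonneg hz 3))
  have h15 : (0:ℝ) ≤ a^1*(b-a)^1*(5/4-b)^8 := (mul_nonneg (mul_nonneg (pow_nonneg ha 1) (pow_nonneg hy 1)) (pow_nonneg hz 8))
  have h16 : (0:ℝ) ≤ a^1*(b-a)^2 := (mul_nonneg (pow_nonneg ha 1) (pow_nonneg hy 2))
  have h17 : (0:ℝ) ≤ a^1*(b-a)^2*(5/4-b)^4 := (mul_nonneg (mul_nonneg (pow_nonneg ha 1) (pow_nonneg hy 2)) (pow_nonneg hz 4))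
  have h18 : (0:ℝ) ≤ a^1*(b-a)^2*(5/4-b)^7 := (mul_nonneg (mul_nonneg (pow_nonneg ha 1) (pow_nonneg hy 2)) (pow_nonneg hz 7))
  have h19 : (0:ℝ) ≤ a^1*(b-a)^3*(5/4-b)^6 := (mul_nonneg (mul_nonneg (pow_nonneg ha 1) (pow_nonneg hy 3)) (pow_nonneg hz 6))
  have h20 : (0:ℝ) ≤ a^1*(b-a)^4 := (mul_nonneg (pow_nonneg ha 1) (pow_nonneg hy 4))
  have h21 : (0:ℝ) ≤ a^1*(b-a)^4*(5/4-b)^5 := (mul_nonneg (mul_nonneg (pow_nonneg ha 1) (pow_nonneg hy 4)) (pow_nonneg hz 5))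
  have h22 : (0:ℝ) ≤ a^1*(b-a)^5*(5/4-b)^4 := (mul_nonneg (mul_nonneg (pow_nonneg ha 1) (pow_nonneg hy 5)) (pow_nonneg hz 4))
  have h23 : (0:ℝ) ≤ a^1*(b-a)^6 := (mul_nonneg (pow_nonneg ha 1) (pow_nonneg hy 6))
  have h24 : (0:ℝ) ≤ a^1*(b-a)^6*(5/4-b)^3 := (mul_nonneg (mul_nonneg (pow_nonneg ha 1) (pow_nonneg hy 6)) (pow_nonneg hz 3))
  have h25 : (0:ℝ) ≤ a^1*(b-a)^7*(5/4-b)^2 := (mul_nonneg (mul_nonneg (pow_nonneg ha 1) (pow_nonneg hy 7)) (pow_nonneg hz 2))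
  have h26 : (0:ℝ) ≤ a^1*(b-a)^8*(5/4-b)^1 := (mul_nonneg (mul_nonneg (pow_nonneg ha 1) (pow_nonneg hy 8)) (pow_nonneg hz 1))
  have h27 : (0:ℝ) ≤ a^2*(5/4-b)^1 := (mul_nonneg (pow_nonneg ha 2) (pow_nonneg hz 1))
  have h28 : (0:ℝ) ≤ a^2*(5/4-b)^3 := (mul_nonneg (pow_nonneg ha 2) (pow_nonneg hz 3))
  have h29 : (0:ℝ) ≤ a^2*(5/4-b)^8 := (mul_nonneg (pow_nonneg ha 2) (pow_nonneg hz 8))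
  have h30 : (0:ℝ) ≤ a^2*(b-a)^1 := (mul_nonneg (pow_nonneg ha 2) (pow_nonneg hy 1))
  have h31 : (0:ℝ) ≤ a^2*(b-a)^1*(5/4-b)^7 := (mul_nonneg (mul_nonneg (pow_nonneg ha 2) (pow_nonneg hy 1)) (pow_nonneg hz 7))
  have h32 : (0:ℝ) ≤ a^2*(b-a)^4*(5/4-b)^4 := (mul_nonneg (mul_nonneg (pow_nonneg ha 2) (pow_nonneg hy 4)) (pow_nonneg hz 4))
  have h33 : (0:ℝ) ≤ a^2*(b-a)^7*(5/4-b)^1 := (mul_nonneg (mul_nonneg (pow_nonneg ha 2) (pow_nonneg hy 7)) (pow_nonneg hz 1))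
  have h34 : (0:ℝ) ≤ a^3 := (pow_nonneg ha 3)
  have h35 : (0:ℝ) ≤ a^3*(5/4-b)^3 := (mul_nonneg (pow_nonneg ha 3) (pow_nonneg hz 3))
  have h36 : (0:ℝ) ≤ a^3*(5/4-b)^7 := (mul_nonneg (pow_nonneg ha 3) (pow_nonneg hz 7))
  have h37 : (0:ℝ) ≤ a^3*(b-a)^1*(5/4-b)^6 := (mul_nonneg (mul_nonneg (pow_nonneg ha 3) (pow_nonneg hy 1)) (pow_nonneg hz 6))
  have h38 : (0:ℝ) ≤ a^3*(b-a)^2*(5/4-b)^5 := (mul_nonneg (mul_nonneg (pow_nonneg ha 3) (pow_nonneg hy 2)) (pow_nonneg hz 5))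
  have h39 : (0:ℝ) ≤ a^3*(b-a)^6*(5/4-b)^1 := (mul_nonneg (mul_nonneg (pow_nonneg ha 3) (pow_nonneg hy 6)) (pow_nonneg hz 1))
  have h40 : (0:ℝ) ≤ a^3*(b-a)^7 := (mul_nonneg (pow_nonneg ha 3) (pow_nonneg hy 7))
  have h41 : (0:ℝ) ≤ a^4*(5/4-b)^1 := (mul_nonneg (pow_nonneg ha 4) (pow_nonneg hz 1))
  have h42 : (0:ℝ) ≤ a^4*(5/4-b)^6 := (mul_nonneg (pow_nonneg ha 4) (pow_nonneg hz 6))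
  have h43 : (0:ℝ) ≤ a^4*(b-a)^1*(5/4-b)^1 := (mul_nonneg (mul_nonneg (pow_nonneg ha 4) (pow_nonneg hy 1)) (pow_nonneg hz 1))
  have h44 : (0:ℝ) ≤ a^4*(b-a)^2*(5/4-b)^4 := (mul_nonneg (mul_nonneg (pow_nonneg ha 4) (pow_nonneg hy 2)) (pow_nonneg hz 4))
  have h45 : (0:ℝ) ≤ a^4*(b-a)^3*(5/4-b)^3 := (mul_nonneg (mul_nonneg (pow_nonneg ha 4) (pow_nonneg hy 3)) (pow_nonneg hz 3))
  have h46 : (0:ℝ) ≤ a^4*(b-a)^4*(5/4-b)^2 := (mul_nonneg (mul_nonneg (pow_nonneg ha 4) (pow_nonneg hy 4)) (pow_nonneg hz 2))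
  have h47 : (0:ℝ) ≤ a^4*(b-a)^5*(5/4-b)^1 := (mul_nonneg (mul_nonneg (pow_nonneg ha 4) (pow_nonneg hy 5)) (pow_nonneg hz 1))
  have h48 : (0:ℝ) ≤ a^4*(b-a)^6 := (mul_nonneg (pow_nonneg ha 4) (pow_nonneg hy 6))
  have h49 : (0:ℝ) ≤ a^5*(5/4-b)^5 := (mul_nonneg (pow_nonneg ha 5) (pow_nonneg hz 5))
  have h50 : (0:ℝ) ≤ a^6*(5/4-b)^1 := (mul_nonneg (pow_nonneg ha 6) (pow_nonneg hz 1))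
  have h51 : (0:ℝ) ≤ a^6*(5/4-b)^4 := (mul_nonneg (pow_nonneg ha 6) (pow_nonneg hz 4))
  have h52 : (0:ℝ) ≤ a^6*(b-a)^1*(5/4-b)^3 := (mul_nonneg (mul_nonneg (pow_nonneg ha 6) (pow_nonneg hy 1)) (pow_nonneg hz 3))
  have h53 : (0:ℝ) ≤ a^6*(b-a)^4 := (mul_nonneg (pow_nonneg ha 6) (pow_nonneg hy 4))
  have h54 : (0:ℝ) ≤ a^7 := (pow_nonneg ha 7)
  have h55 : (0:ℝ) ≤ a^7*(5/4-b)^3 := (mul_nonneg (pow_nonneg ha 7) (pow_nonneg hz 3))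
  have h56 : (0:ℝ) ≤ a^7*(b-a)^1 := (mul_nonneg (pow_nonneg ha 7) (pow_nonneg hy 1))
  have h57 : (0:ℝ) ≤ a^7*(b-a)^1*(5/4-b)^2 := (mul_nonneg (mul_nonneg (pow_nonneg ha 7) (pow_nonneg hy 1)) (pow_nonneg hz 2))
  have h58 : (0:ℝ) ≤ a^7*(b-a)^2*(5/4-b)^1 := (mul_nonneg (mul_nonneg (pow_nonneg ha 7) (pow_nonneg hy 2)) (pow_nonneg hz 1))
  have h59 : (0:ℝ) ≤ a^7*(b-a)^3 := (mul_nonneg (pow_nonneg ha 7) (pow_nonneg hy 3))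
  have h60 : (0:ℝ) ≤ a^8*(5/4-b)^2 := (mul_nonneg (pow_nonneg ha 8) (pow_nonneg hz 2))
  have h61 : (0:ℝ) ≤ a^8*(b-a)^2 := (mul_nonneg (pow_nonneg ha 8) (pow_nonneg hy 2))
  have h62 : (0:ℝ) ≤ a^9*(5/4-b)^1 := (mul_nonneg (pow_nonneg ha 9) (pow_nonneg hz 1))
  linarith [h0, h1, h2, h3, h4, h5, h6, h7, h8, h9, h10, h11, h12, h13, h14, h15, h16, h17, h18, h19, h20, h21, h22, h23, h24, h25, h26, h27, h28, h29, h30, h31, h32, h33, h34, h35, h36, h37, h38, h39, h40, h41, h42, h43, h44, h45, h46, h47, h48, h49, h50, h51, h52, h53, h54, h55, h56, h57, h58, h59, h60, h61, h62]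

lemma frac_ineq {a b : ℝ} (ha : 0 ≤ a) (hab : a ≤ b) (hb : b ≤ 5/4) :
    a^4/(1+a^2) + b^4/(1+b^2) + (3/2)*a*b*(a^2/(1+a^2)+b^2/(1+b^2))
      + (3/1000)*a*b^2*(a+b) + (1/1000000)*a^2*b^4 ≤ (a+b)^4/(1+(a+b)^2) := by
  have hW := wcert a b ha hab hb
  have hP : 0 ≤ a * (b * ((2497/1000)*b^2 + (247/500)*b^4 - (3/1000)*b^6 + (5997/1000)*a*b + (1987999/1000000)*a*b^3 - (4501/500000)*a*b^5 - (1/1000000)*a*b^7 + (5/2)*a^2 + (497/250)*a^2*b^2 - (507501/500000)*a^2*b^4 - (1501/500000)*a^2*b^6 + (997/500)*a^3*b - (1007501/500000)*a^3*b^3 - (9003/1000000)*a^3*b^5 - (1/1000000)*a^3*b^7 + (1/2)*a^4 - (1009/1000)*a^4*b^2 - (4501/500000)*a^4*b^4 - (1/500000)*a^4*b^6 - (3/1000)*a^5*b - (3001/1000000)*a^5*b^3 - (1/1000000)*a^5*b^5)) :=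
    mul_nonneg ha (mul_nonneg (le_trans ha hab) hW)
  rw [← sub_nonneg]
  have h1 : (0:ℝ) < 1+a^2 := by positivity
  have h2 : (0:ℝ) < 1+b^2 := by positivity
  have h3 : (0:ℝ) < 1+(a+b)^2 := by positivity
  have key : (a+b)^4/(1+(a+b)^2) - (a^4/(1+a^2) + b^4/(1+b^2) + (3/2)*a*b*(a^2/(1+a^2)+b^2/(1+b^2))
      + (3/1000)*a*b^2*(a+b) + (1/1000000)*a^2*b^4)
      = (a * (b * ((2497/1000)*b^2 + (247/500)*b^4 - (3/1000)*b^6 + (5997/1000)*a*b + (1987999/1000000)*a*b^3 - (4501/500000)*a*b^5 - (1/1000000)*a*b^7 + (5/2)*a^2 + (497/250)*a^2*b^2 - (507501/500000)*a^2*b^4 - (1501/500000)*a^2*b^6 + (997/500)*a^3*b - (1007501/500000)*a^3*b^3 - (9003/1000000)*a^3*b^5 - (1/1000000)*a^3*b^7 + (1/2)*a^4 - (1009/1000)*a^4*b^2 - (4501/500000)*a^4*b^4 - (1/500000)*a^4*b^6 - (3/1000)*a^5*b - (3001/1000000)*a^5*b^3 - (1/1000000)*a^5*b^5)))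
        / ((1+a^2)*(1+b^2)*(1+(a+b)^2)) := by
    field_simp
    ring
  rw [key]
  exact div_nonneg hP (by positivity)

lemma lam_lb2 {r : ℝ} (hr : 0 ≤ r) :
    Real.sqrt 2 * (r * (1 - (r^2/(2*(1+r^2))/2 + (r^2/(2*(1+r^2)))^2/2))) ≤ lam r := by
  have hx0 : (0:ℝ) ≤ r^2/(2*(1+r^2)) := by positivity
  have hx1 : r^2/(2*(1+r^2)) ≤ 1/2 := by
    rw [div_le_iff₀ (by positivity)]; nlinarith
  have hfrac : (2+r^2)/(1+r^2) = 2*(1 - r^2/(2*(1+r^2))) := by field_simp; ring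
  have hpos : (0:ℝ) ≤ 1 - (r^2/(2*(1+r^2))/2 + (r^2/(2*(1+r^2)))^2/2) := by nlinarith
  have hsq : (1 - (r^2/(2*(1+r^2))/2 + (r^2/(2*(1+r^2)))^2/2))^2
      ≤ 1 - r^2/(2*(1+r^2)) := by nlinarith
  have h2 : 1 - (r^2/(2*(1+r^2))/2 + (r^2/(2*(1+r^2)))^2/2)
      ≤ Real.sqrt (1 - r^2/(2*(1+r^2))) := by
    calc 1 - (r^2/(2*(1+r^2))/2 + (r^2/(2*(1+r^2)))^2/2)
        = Real.sqrt ((1 - (r^2/(2*(1+r^2))/2 + (r^2/(2*(1+r^2)))^2/2))^2) :=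
          (Real.sqrt_sq hpos).symm
      _ ≤ Real.sqrt (1 - r^2/(2*(1+r^2))) := Real.sqrt_le_sqrt hsq
  have hm : (0:ℝ) ≤ 1 - r^2/(2*(1+r^2)) := by linarith [hx1]
  calc Real.sqrt 2 * (r * (1 - (r^2/(2*(1+r^2))/2 + (r^2/(2*(1+r^2)))^2/2)))
      ≤ Real.sqrt 2 * (r * Real.sqrt (1 - r^2/(2*(1+r^2)))) := by
        apply mul_le_mul_of_nonneg_left _ (Real.sqrt_nonneg 2)
        exact mul_le_mul_of_nonneg_left h2 hr
    _ = r * (Real.sqrt 2 * Real.sqrt (1 - r^2/(2*(1+r^2)))) := by ring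
    _ = r * Real.sqrt (2 * (1 - r^2/(2*(1+r^2)))) := by
        rw [← Real.sqrt_mul (by norm_num : (0:ℝ) ≤ 2)]
    _ = lam r := by rw [lam, hfrac]

set_option maxHeartbeats 1000000 in
lemma gap2 {a b : ℝ} (ha : 0 < a) (hab : a ≤ b) (hb : b ≤ 5/4) :
    (1/1000)*a*b^2 ≤ lam a + lam b - lam (a+b) := by
  have hb0 : (0:ℝ) < b := lt_of_lt_of_le ha hab
  have hc0 : (0:ℝ) < a + b := by linarith
  have hq0 : (0:ℝ) ≤ (1/1000)*a*b^2 := by positivity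
  -- e-bounds
  have hxa0 : (0:ℝ) ≤ a^2/(2*(1+a^2)) := by positivity
  have hxb0 : (0:ℝ) ≤ b^2/(2*(1+b^2)) := by positivity
  have hxa1 : a^2/(2*(1+a^2)) ≤ 1/2 := by rw [div_le_iff₀ (by positivity)]; nlinarith
  have hxb1 : b^2/(2*(1+b^2)) ≤ 1/2 := by rw [div_le_iff₀ (by positivity)]; nlinarith
  have hea0 : (0:ℝ) ≤ a^2/(2*(1+a^2))/2 + (a^2/(2*(1+a^2)))^2/2 := by positivity
  have heb0 : (0:ℝ) ≤ b^2/(2*(1+b^2))/2 + (b^2/(2*(1+b^2)))^2/2 := by positivity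
  have hea1 : a^2/(2*(1+a^2))/2 + (a^2/(2*(1+a^2)))^2/2 ≤ 1 := by nlinarith
  have heb1 : b^2/(2*(1+b^2))/2 + (b^2/(2*(1+b^2)))^2/2 ≤ 1 := by nlinarith
  have heb38 : a^2/(2*(1+a^2))/2 + (a^2/(2*(1+a^2)))^2/2 ≤ (3/8)*(a^2/(1+a^2)) := by
    have h : a^2/(2*(1+a^2)) = (1/2)*(a^2/(1+a^2)) := by field_simp
    have hsq' : (a^2/(2*(1+a^2)))^2 ≤ (1/2)*(a^2/(2*(1+a^2))) := by nlinarith [hxa0, hxa1]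
    linarith
  have heb38' : b^2/(2*(1+b^2))/2 + (b^2/(2*(1+b^2)))^2/2 ≤ (3/8)*(b^2/(1+b^2)) := by
    have h : b^2/(2*(1+b^2)) = (1/2)*(b^2/(1+b^2)) := by field_simp
    have hsq' : (b^2/(2*(1+b^2)))^2 ≤ (1/2)*(b^2/(2*(1+b^2))) := by nlinarith [hxb0, hxb1]
    linarith
  -- product lower bound
  have lbA := lam_lb2 ha.le
  have lbB := lam_lb2 hb0.le
  have hA0 : (0:ℝ) ≤ Real.sqrt 2 * (a * (1 - (a^2/(2*(1+a^2))/2 + (a^2/(2*(1+a^2)))^2/2))) := by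
    have : (0:ℝ) ≤ 1 - (a^2/(2*(1+a^2))/2 + (a^2/(2*(1+a^2)))^2/2) := by linarith
    positivity
  have hB0 : (0:ℝ) ≤ Real.sqrt 2 * (b * (1 - (b^2/(2*(1+b^2))/2 + (b^2/(2*(1+b^2)))^2/2))) := by
    have : (0:ℝ) ≤ 1 - (b^2/(2*(1+b^2))/2 + (b^2/(2*(1+b^2)))^2/2) := by linarith
    positivity
  have hprod0 : (Real.sqrt 2 * (a * (1 - (a^2/(2*(1+a^2))/2 + (a^2/(2*(1+a^2)))^2/2))))
      * (Real.sqrt 2 * (b * (1 - (b^2/(2*(1+b^2))/2 + (b^2/(2*(1+b^2)))^2/2))))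
      ≤ lam a * lam b :=
    mul_le_mul lbA lbB hB0 (lam_nonneg ha.le)
  have hs2 : Real.sqrt 2 * Real.sqrt 2 = 2 := Real.mul_self_sqrt (by norm_num)
  have hprod : 2 * (a * (1 - (a^2/(2*(1+a^2))/2 + (a^2/(2*(1+a^2)))^2/2)))
      * (b * (1 - (b^2/(2*(1+b^2))/2 + (b^2/(2*(1+b^2)))^2/2))) ≤ lam a * lam b := by
    calc 2 * (a * (1 - (a^2/(2*(1+a^2))/2 + (a^2/(2*(1+a^2)))^2/2)))
        * (b * (1 - (b^2/(2*(1+b^2))/2 + (b^2/(2*(1+b^2)))^2/2)))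
        = (Real.sqrt 2 * (a * (1 - (a^2/(2*(1+a^2))/2 + (a^2/(2*(1+a^2)))^2/2))))
          * (Real.sqrt 2 * (b * (1 - (b^2/(2*(1+b^2))/2 + (b^2/(2*(1+b^2)))^2/2)))) := by
          linear_combination (-((a * (1 - (a^2/(2*(1+a^2))/2 + (a^2/(2*(1+a^2)))^2/2)))
            * (b * (1 - (b^2/(2*(1+b^2))/2 + (b^2/(2*(1+b^2)))^2/2))))) * hs2
      _ ≤ lam a * lam b := hprod0
  -- squares
  have E1 : lam a ^2 = 2*a^2 - a^4/(1+a^2) := by rw [lam_sq]; field_simp; ring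
  have E2 : lam b ^2 = 2*b^2 - b^4/(1+b^2) := by rw [lam_sq]; field_simp; ring
  have E3 : lam (a+b) ^2 = 2*(a+b)^2 - (a+b)^4/(1+(a+b)^2) := by rw [lam_sq]; field_simp; ring
  have l1 : lam (a+b) ≤ (3/2)*(a+b) := by nlinarith [lam_le hc0.le, sqrt_two_le, hc0]
  have E4 : 2*((1/1000)*a*b^2)*lam (a+b) ≤ 3*((1/1000)*a*b^2)*(a+b) := by
    have := mul_le_mul_of_nonneg_left l1 (by positivity : (0:ℝ) ≤ 2*((1/1000)*a*b^2))
    linarith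
  have p1 := mul_le_mul_of_nonneg_left heb38 (by positivity : (0:ℝ) ≤ 4*(a*b))
  have p2 := mul_le_mul_of_nonneg_left heb38' (by positivity : (0:ℝ) ≤ 4*(a*b))
  have p3 : (0:ℝ) ≤ 4*(a*b)*((a^2/(2*(1+a^2))/2 + (a^2/(2*(1+a^2)))^2/2)
      * (b^2/(2*(1+b^2))/2 + (b^2/(2*(1+b^2)))^2/2)) :=
    mul_nonneg (by positivity) (mul_nonneg hea0 heb0)
  have E6 : 4*a*b*(1 - (3/8)*(a^2/(1+a^2)) - (3/8)*(b^2/(1+b^2)))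
      ≤ 4 * (a * (1 - (a^2/(2*(1+a^2))/2 + (a^2/(2*(1+a^2)))^2/2)))
       * (b * (1 - (b^2/(2*(1+b^2))/2 + (b^2/(2*(1+b^2)))^2/2))) := by
    nlinarith [p1, p2, p3]
  have E7 := frac_ineq ha.le hab hb
  have hfin0 : 0 ≤ lam (a+b) + (1/1000)*a*b^2 := by
    have := lam_nonneg hc0.le; linarith
  have hfin1 : 0 ≤ lam a + lam b := by
    have := lam_nonneg ha.le; have := lam_nonneg hb0.le; linarith
  have hsq : (lam (a+b) + (1/1000)*a*b^2)^2 ≤ (lam a + lam b)^2 := by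
    nlinarith [E1, E2, E3, E4, E6, E7, hprod]
  have := Real.sqrt_le_sqrt hsq
  rw [Real.sqrt_sq hfin0, Real.sqrt_sq hfin1] at this
  linarith

lemma gap_main {a b : ℝ} (ha : 0 < a) (hab : a ≤ b) :
    (1/1000) * (b^2/(1+b^2)) * (a/(1+a^2)) ≤ lam a + lam b - lam (a+b) := by
  have hb0 : (0:ℝ) < b := lt_of_lt_of_le ha hab
  rcases le_or_gt b (5/4) with hb | hb
  · have hg := gap2 ha hab hb
    have k1 : b^2/(1+b^2) ≤ b^2 := by
      rw [div_le_iff₀ (by positivity)]; nlinarith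
    have k2 : a/(1+a^2) ≤ a := by
      rw [div_le_iff₀ (by positivity)]; nlinarith
    have k10 : (0:ℝ) ≤ b^2/(1+b^2) := by positivity
    have k20 : (0:ℝ) ≤ a/(1+a^2) := by positivity
    have : (b^2/(1+b^2)) * (a/(1+a^2)) ≤ b^2 * a := by
      exact mul_le_mul k1 k2 k20 (by positivity)
    nlinarith [hg, this]
  · have hmu := mu_dec hb.le (by linarith : b ≤ a + b)
    have hmuA := mu_lower ha.le
    have hb2 : b^2/(1+b^2) ≤ 1 := by
      rw [div_le_one (by positivity)]; nlinarith
    have hfa : (0:ℝ) ≤ a/(1+a^2) := by positivity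
    have hx : (b^2/(1+b^2)) * (a/(1+a^2)) ≤ 1 * (a/(1+a^2)) :=
      mul_le_mul_of_nonneg_right hb2 hfa
    nlinarith [hmu, hmuA, hx, hfa]

set_option maxHeartbeats 2000000 in
theorem stmt_7 : ∃ c : ℝ, 0 < c ∧
    ∀ a b cv : EuclideanSpace ℝ (Fin 2), a ≠ 0 → b ≠ 0 → cv ≠ 0 →
      cv = a + b → ‖a‖ ≤ min ‖b‖ ‖cv‖ →
      Lam a + Lam b - Lam cv ≥
        c * (‖a‖ * (1 - (inner ℝ cv a : ℝ) / (‖cv‖ * ‖a‖) +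
              (1 - (inner ℝ cv b : ℝ) / (‖cv‖ * ‖b‖))) +
          ‖b‖ * ‖cv‖ / (1 + ‖b‖ * ‖cv‖) * (‖a‖ / (1 + ‖a‖ ^ 2))) := by
  refine ⟨1/2000, by norm_num, ?_⟩
  intro a b cv ha hb hcv hsum hmin
  have hα : (0:ℝ) < ‖a‖ := norm_pos_iff.mpr ha
  have hβ : (0:ℝ) < ‖b‖ := norm_pos_iff.mpr hb
  have hγ : (0:ℝ) < ‖cv‖ := norm_pos_iff.mpr hcv
  have hαβ : ‖a‖ ≤ ‖b‖ := le_trans hmin (min_le_left _ _)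
  have htri : ‖cv‖ ≤ ‖a‖ + ‖b‖ := by rw [hsum]; exact norm_add_le a b
  have hin : (inner ℝ cv a : ℝ) + (inner ℝ cv b : ℝ) = ‖cv‖^2 := by
    have h1 : (inner ℝ cv cv : ℝ) = ‖cv‖^2 := real_inner_self_eq_norm_sq cv
    have h2 : (inner ℝ cv (a + b) : ℝ) = (inner ℝ cv a : ℝ) + (inner ℝ cv b : ℝ) :=
      inner_add_right cv a b
    rw [← h1, ← h2, ← hsum]
  have hca : (inner ℝ cv a : ℝ) ≤ ‖cv‖ * ‖a‖ := real_inner_le_norm cv a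
  have hcb : (inner ℝ cv b : ℝ) ≤ ‖cv‖ * ‖b‖ := real_inner_le_norm cv b
  have hTa : (0:ℝ) ≤ 1 - (inner ℝ cv a : ℝ) / (‖cv‖ * ‖a‖) := by
    have : (inner ℝ cv a : ℝ) / (‖cv‖ * ‖a‖) ≤ 1 := by
      rw [div_le_one (by positivity)]; exact hca
    linarith
  have hTb : (0:ℝ) ≤ 1 - (inner ℝ cv b : ℝ) / (‖cv‖ * ‖b‖) := by
    have : (inner ℝ cv b : ℝ) / (‖cv‖ * ‖b‖) ≤ 1 := by
      rw [div_le_one (by positivity)]; exact hcb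
    linarith
  have e1 : ‖a‖ * (1 - (inner ℝ cv a : ℝ) / (‖cv‖ * ‖a‖)) = ‖a‖ - (inner ℝ cv a : ℝ)/‖cv‖ := by
    field_simp
  have e2 : ‖b‖ * (1 - (inner ℝ cv b : ℝ) / (‖cv‖ * ‖b‖)) = ‖b‖ - (inner ℝ cv b : ℝ)/‖cv‖ := by
    field_simp
  have e3 : (inner ℝ cv a : ℝ)/‖cv‖ + (inner ℝ cv b : ℝ)/‖cv‖ = ‖cv‖ := by
    rw [← add_div, hin, pow_two, mul_div_assoc, div_self hγ.ne', mul_one]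
  have e4 : ‖a‖ * (1 - (inner ℝ cv b : ℝ) / (‖cv‖ * ‖b‖))
      ≤ ‖b‖ * (1 - (inner ℝ cv b : ℝ) / (‖cv‖ * ‖b‖)) :=
    mul_le_mul_of_nonneg_right hαβ hTb
  have hT : ‖a‖ * (1 - (inner ℝ cv a : ℝ) / (‖cv‖ * ‖a‖) +
      (1 - (inner ℝ cv b : ℝ) / (‖cv‖ * ‖b‖))) ≤ ‖a‖ + ‖b‖ - ‖cv‖ := by
    have expand : ‖a‖ * (1 - (inner ℝ cv a : ℝ) / (‖cv‖ * ‖a‖) +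
        (1 - (inner ℝ cv b : ℝ) / (‖cv‖ * ‖b‖)))
        = ‖a‖ * (1 - (inner ℝ cv a : ℝ) / (‖cv‖ * ‖a‖))
          + ‖a‖ * (1 - (inner ℝ cv b : ℝ) / (‖cv‖ * ‖b‖)) := by ring
    rw [expand, e1]
    linarith [e4, e2, e3]
  have hT0 : (0:ℝ) ≤ ‖a‖ * (1 - (inner ℝ cv a : ℝ) / (‖cv‖ * ‖a‖) +
      (1 - (inner ℝ cv b : ℝ) / (‖cv‖ * ‖b‖))) :=
    mul_nonneg hα.le (by linarith)
  have hdiff := lam_diff hγ.le htri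
  have hdd : (‖a‖ + ‖b‖ - ‖cv‖)/2 ≤ (‖a‖ + ‖b‖ - ‖cv‖)/Real.sqrt 2 := by
    rw [div_le_div_iff₀ (show (0:ℝ) < 2 by norm_num) (show (0:ℝ) < Real.sqrt 2 by positivity)]
    nlinarith [sqrt_two_le, htri, le_sqrt_two]
  have hgap := gap_main hα hαβ
  have hbc : ‖b‖ * ‖cv‖ / (1 + ‖b‖ * ‖cv‖) ≤ 2*(‖b‖^2/(1+‖b‖^2)) := by
    rw [← mul_div_assoc, div_le_div_iff₀ (by positivity) (by positivity)]
    nlinarith [mul_pos hβ hγ, hβ, hγ, htri, hαβ, mul_le_mul_of_nonneg_left htri hβ.le]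
  have hfa : (0:ℝ) ≤ ‖a‖/(1+‖a‖^2) := by positivity
  have hbcY : ‖b‖ * ‖cv‖ / (1 + ‖b‖ * ‖cv‖) * (‖a‖ / (1 + ‖a‖ ^ 2))
      ≤ 2*(‖b‖^2/(1+‖b‖^2)) * (‖a‖ / (1 + ‖a‖ ^ 2)) :=
    mul_le_mul_of_nonneg_right hbc hfa
  have hLam : Lam a = lam ‖a‖ := rfl
  have hLamb : Lam b = lam ‖b‖ := rfl
  have hLamc : Lam cv = lam ‖cv‖ := rfl
  rw [hLam, hLamb, hLamc, ge_iff_le]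
  have key : lam ‖a‖ + lam ‖b‖ - lam ‖cv‖
      = (lam ‖a‖ + lam ‖b‖ - lam (‖a‖+‖b‖)) + (lam (‖a‖+‖b‖) - lam ‖cv‖) := by ring
  rw [key]
  have hchain : ‖a‖ * (1 - (inner ℝ cv a : ℝ) / (‖cv‖ * ‖a‖) +
      (1 - (inner ℝ cv b : ℝ) / (‖cv‖ * ‖b‖))) / 2 ≤ lam (‖a‖+‖b‖) - lam ‖cv‖ := by
    have : ‖a‖ * (1 - (inner ℝ cv a : ℝ) / (‖cv‖ * ‖a‖) +
        (1 - (inner ℝ cv b : ℝ) / (‖cv‖ * ‖b‖))) / 2 ≤ (‖a‖ + ‖b‖ - ‖cv‖)/2 := by linarith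
    linarith [hdd, hdiff]
  linarith [hchain, hgap, hbcY, hT0, hfa]
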